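/- Let x ∈ ℝ^{m×n}, r = min{m,n}, s ∈ {0,1,…,r}, and S = {y ∈ ℝ^{m×n} : rank(y) ≤ s}. For every pair of orthogonal matrices (U,V) ∈ O(m)×O(n) with x = UΣ(x)Vᵀ, the truncated matrix y = UΣ_s(x)Vᵀ belongs to the projection P_S(x); i.e., y ∈ S and ‖x − y‖ ≤ ‖x − z‖ for all z ∈ S. -/

import Mathlib

set_option maxHeartbeats 1000000


open Filter Topology Matrix Set
open scoped ENNReal

attribute [local instance] Matrix.frobeniusNormedAddCommGroup

noncomputable section

namespace RankPaper

variable {m n : ℕ}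

/-- Singular values of `x` in decreasing order (`svals x ⟨0,_⟩ = σ₁(x)` is the largest),
indexed by `Fin (min m n)`; defined as the square roots of the decreasingly sorted
eigenvalues of `xᴴ * x`. -/
noncomputable def svals (x : Matrix (Fin m) (Fin n) ℝ) : Fin (min m n) → ℝ := fun j =>
  Real.sqrt
    (((Matrix.isHermitian_conjTranspose_mul_self x).eigenvalues ∘
        ⇑(Tuple.sort (Matrix.isHermitian_conjTranspose_mul_self x).eigenvalues))
      (Fin.rev (Fin.castLE (min_le_right m n) j)))

/-- The `m × n` diagonal matrix of singular values `Σ(x)`. -/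
noncomputable def SigmaMat (x : Matrix (Fin m) (Fin n) ℝ) : Matrix (Fin m) (Fin n) ℝ :=
  Matrix.of fun i j =>
    if h : (i : ℕ) = (j : ℕ) ∧ (i : ℕ) < min m n then svals x ⟨(i : ℕ), h.2⟩ else 0

/-- The truncated diagonal matrix `Σ_s(x)` keeping only the `s` largest singular values. -/
noncomputable def SigmaTrunc (s : ℕ) (x : Matrix (Fin m) (Fin n) ℝ) :
    Matrix (Fin m) (Fin n) ℝ :=
  Matrix.of fun i j =>
    if h : (i : ℕ) = (j : ℕ) ∧ (i : ℕ) < min m n ∧ (i : ℕ) < s then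
      svals x ⟨(i : ℕ), h.2.1⟩ else 0

/-- The (multivalued) projection onto a set `Ω ⊆ ℝ^{m×n}` w.r.t. the Frobenius norm. -/
def projSet (Ω : Set (Matrix (Fin m) (Fin n) ℝ)) (x : Matrix (Fin m) (Fin n) ℝ) :
    Set (Matrix (Fin m) (Fin n) ℝ) :=
  {y | y ∈ Ω ∧ ∀ z ∈ Ω, ‖x - y‖ ≤ ‖x - z‖}

/-- The proximal normal cone to `Ω` at `xb`: all vectors `t • (x - xb)` with `t ≥ 0`
and `xb` a nearest point of `Ω` to `x`. -/
def proxNormalCone (Ω : Set (Matrix (Fin m) (Fin n) ℝ)) (xb : Matrix (Fin m) (Fin n) ℝ) :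
    Set (Matrix (Fin m) (Fin n) ℝ) :=
  {v | ∃ t : ℝ, 0 ≤ t ∧ ∃ x, xb ∈ projSet Ω x ∧ v = t • (x - xb)}

/-- The limiting (Mordukhovich) normal cone to `Ω` at `xb`, described via limits of
proximal-normal directions `v^k ∈ cone (x^k - P_Ω(x^k))` along sequences `x^k → xb`. -/
def normalCone (Ω : Set (Matrix (Fin m) (Fin n) ℝ)) (xb : Matrix (Fin m) (Fin n) ℝ) :
    Set (Matrix (Fin m) (Fin n) ℝ) :=
  {v | ∃ x w : ℕ → Matrix (Fin m) (Fin n) ℝ,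
      Tendsto x atTop (𝓝 xb) ∧ Tendsto w atTop (𝓝 v) ∧
      ∀ k, ∃ t : ℝ, 0 ≤ t ∧ ∃ y ∈ projSet Ω (x k), w k = t • (x k - y)}

/-- The row space of `x`, i.e. `range (xᵀ) = ker(x)ᗮ ⊆ ℝⁿ`. -/
def rowSpace (x : Matrix (Fin m) (Fin n) ℝ) : Submodule ℝ (Fin n → ℝ) :=
  LinearMap.range (Matrix.mulVecLin xᵀ)

/-- `𝕁(x, α) = {j : σ_j(x) ≥ α}` (in particular empty for `α = ∞`). -/
def Jset (x : Matrix (Fin m) (Fin n) ℝ) (α : ℝ≥0∞) : Set (Fin (min m n)) :=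
  {j | α ≤ ENNReal.ofReal (svals x j)}

/-- `α_s(x) = sup {α : |𝕁(x,α)| ≥ s}`. -/
noncomputable def alphaS (s : ℕ) (x : Matrix (Fin m) (Fin n) ℝ) : ℝ≥0∞ :=
  sSup {α : ℝ≥0∞ | s ≤ (Jset x α).ncard}




/-- Squared Frobenius norm as a sum of squares of entries. -/
def F {α β : Type*} [Fintype α] [Fintype β] (A : Matrix α β ℝ) : ℝ :=
  ∑ i, ∑ j, (A i j) ^ 2

lemma F_nonneg {α β : Type*} [Fintype α] [Fintype β] (A : Matrix α β ℝ) : 0 ≤ F A :=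
  Finset.sum_nonneg fun _ _ => Finset.sum_nonneg fun _ _ => sq_nonneg _

lemma F_eq_trace {α β : Type*} [Fintype α] [Fintype β] (A : Matrix α β ℝ) :
    F A = Matrix.trace (Aᵀ * A) := by
  simp only [F, Matrix.trace, Matrix.diag, Matrix.mul_apply, Matrix.transpose_apply, sq]
  exact Finset.sum_comm

lemma norm_eq_sqrt_F {m n : ℕ} (A : Matrix (Fin m) (Fin n) ℝ) :
    ‖A‖ = Real.sqrt (F A) := by
  rw [Matrix.frobenius_norm_def, Real.sqrt_eq_rpow]
  congr 1
  unfold F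
  congr 1; ext i; congr 1; ext j
  rw [show ((2:ℝ)) = ((2:ℕ):ℝ) by norm_num, Real.rpow_natCast]
  simp [sq_abs]

lemma F_conj {m n : ℕ} (U : Matrix (Fin m) (Fin m) ℝ) (V : Matrix (Fin n) (Fin n) ℝ)
    (A : Matrix (Fin m) (Fin n) ℝ) (hU : Uᵀ * U = 1) (hV : Vᵀ * V = 1) :
    F (U * A * Vᵀ) = F A := by
  rw [F_eq_trace, F_eq_trace]
  have h1 : ∀ X : Matrix (Fin m) (Fin n) ℝ, Uᵀ * (U * X) = X := fun X => by
    rw [← Matrix.mul_assoc, hU, Matrix.one_mul]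
  have : (U * A * Vᵀ)ᵀ * (U * A * Vᵀ) = V * (Aᵀ * A) * Vᵀ := by
    simp only [Matrix.transpose_mul, Matrix.transpose_transpose, Matrix.mul_assoc, h1]
  rw [this, Matrix.trace_mul_comm (V * (Aᵀ * A)) Vᵀ, ← Matrix.mul_assoc, hV, Matrix.one_mul]



lemma maj (N s : ℕ) (hs : s ≤ N) (lam d : ℕ → ℝ)
    (hanti : ∀ i j, i ≤ j → lam j ≤ lam i) (hlam0 : ∀ i, 0 ≤ lam i)
    (hd0 : ∀ i, 0 ≤ d i) (hd1 : ∀ i, d i ≤ 1)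
    (hsum : ∑ i ∈ Finset.range N, d i ≤ s) :
    ∑ i ∈ Finset.range N, lam i * d i ≤ ∑ i ∈ Finset.range s, lam i := by
  set c := lam s with hc
  have hsplit : ∑ i ∈ Finset.range N, lam i * d i
      = ∑ i ∈ Finset.range s, lam i * d i + ∑ i ∈ Finset.Ico s N, lam i * d i := by
    rw [Finset.range_eq_Ico, Finset.range_eq_Ico]
    exact (Finset.sum_Ico_consecutive (fun i => lam i * d i) (Nat.zero_le s) hs).symm
  have h1 : ∑ i ∈ Finset.range s, lam i * d i
      ≤ ∑ i ∈ Finset.range s, (lam i + c * (d i - 1)) := by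
    apply Finset.sum_le_sum
    intro i hi
    have hiS : i ≤ s := le_of_lt (Finset.mem_range.1 hi)
    have hlam : c ≤ lam i := hanti i s hiS
    nlinarith [hd1 i, hd0 i]
  have h2 : ∑ i ∈ Finset.Ico s N, lam i * d i ≤ ∑ i ∈ Finset.Ico s N, c * d i := by
    apply Finset.sum_le_sum
    intro i hi
    have : lam i ≤ c := hanti s i (Finset.mem_Ico.1 hi).1
    nlinarith [hd0 i]
  have h3 : ∑ i ∈ Finset.range s, (lam i + c * (d i - 1)) + ∑ i ∈ Finset.Ico s N, c * d i
      = ∑ i ∈ Finset.range s, lam i + c * (∑ i ∈ Finset.range N, d i - s) := by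
    rw [Finset.sum_add_distrib, ← Finset.mul_sum, ← Finset.mul_sum]
    have : ∑ i ∈ Finset.range N, d i
        = ∑ i ∈ Finset.range s, d i + ∑ i ∈ Finset.Ico s N, d i := by
      rw [Finset.range_eq_Ico, Finset.range_eq_Ico]
      exact (Finset.sum_Ico_consecutive d (Nat.zero_le s) hs).symm
    rw [this]
    have hcard : ∑ i ∈ Finset.range s, (d i - 1) = (∑ i ∈ Finset.range s, d i) - s := by
      rw [Finset.sum_sub_distrib]
      simp
    rw [hcard]; ring
  have h4 : c * (∑ i ∈ Finset.range N, d i - s) ≤ 0 := by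
    apply mul_nonpos_of_nonneg_of_nonpos (hlam0 s)
    linarith
  linarith



lemma exists_proj {m n : ℕ} (w : Matrix (Fin m) (Fin n) ℝ) :
    ∃ P : Matrix (Fin m) (Fin m) ℝ, Pᵀ = P ∧ P * P = P ∧ P * w = w ∧
      Matrix.trace P = (w.rank : ℝ) := by
  classical
  let ι : EuclideanSpace ℝ (Fin m) ≃ₗ[ℝ] (Fin m → ℝ) :=
    WithLp.linearEquiv 2 ℝ (Fin m → ℝ)
  set W0 : Submodule ℝ (Fin m → ℝ) := Submodule.span ℝ (Set.range wᵀ) with hW0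
  set W : Submodule ℝ (EuclideanSpace ℝ (Fin m)) := W0.map ι.symm.toLinearMap with hW
  set t := Module.finrank ℝ W with ht
  set B := stdOrthonormalBasis ℝ W with hB
  set q : Fin t → (Fin m → ℝ) := fun k i => (B k : EuclideanSpace ℝ (Fin m)) i with hq
  have horth : ∀ k l, (∑ i, q k i * q l i) = if k = l then 1 else 0 := by
    intro k l
    have h := (orthonormal_iff_ite (𝕜 := ℝ)).1 B.orthonormal k l
    rw [Submodule.coe_inner, PiLp.inner_apply] at h
    simp only [RCLike.inner_apply, starRingEnd_apply, star_trivial] at h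
    rw [← h]; exact Finset.sum_congr rfl fun i _ => mul_comm _ _
  set P : Matrix (Fin m) (Fin m) ℝ := Matrix.of fun i j => ∑ k, q k i * q k j with hP
  have hPsym : Pᵀ = P := by
    ext i j
    simp only [hP, Matrix.transpose_apply, Matrix.of_apply]
    exact Finset.sum_congr rfl fun k _ => mul_comm _ _
  have hPidem : P * P = P := by
    ext i j
    simp only [hP, Matrix.mul_apply, Matrix.of_apply]
    calc ∑ a, (∑ k, q k i * q k a) * (∑ l, q l a * q l j)
        = ∑ a, ∑ k, ∑ l, (q k i * q l j) * (q k a * q l a) := by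
          apply Finset.sum_congr rfl; intro a _
          rw [Finset.sum_mul]
          apply Finset.sum_congr rfl; intro k _
          rw [Finset.mul_sum]
          apply Finset.sum_congr rfl; intro l _
          ring
      _ = ∑ k, ∑ l, (q k i * q l j) * (∑ a, q k a * q l a) := by
          rw [Finset.sum_comm]
          apply Finset.sum_congr rfl; intro k _
          rw [Finset.sum_comm]
          apply Finset.sum_congr rfl; intro l _
          rw [Finset.mul_sum]
      _ = ∑ k, q k i * q k j := by
          simp only [horth, mul_ite, mul_one, mul_zero]
          apply Finset.sum_congr rfl; intro k _
          simp
  have hfixq : ∀ l, P.mulVec (q l) = q l := by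
    intro l
    funext i
    simp only [Matrix.mulVec, dotProduct, hP, Matrix.of_apply]
    calc ∑ j, (∑ k, q k i * q k j) * q l j
        = ∑ j, ∑ k, q k i * (q k j * q l j) := by
          apply Finset.sum_congr rfl; intro j _
          rw [Finset.sum_mul]
          apply Finset.sum_congr rfl; intro k _
          ring
      _ = ∑ k, q k i * (∑ j, q k j * q l j) := by
          rw [Finset.sum_comm]
          apply Finset.sum_congr rfl; intro k _
          rw [Finset.mul_sum]
      _ = q l i := by
          simp only [horth, mul_ite, mul_one, mul_zero]
          simp
  have hfix : ∀ v : Fin m → ℝ, v ∈ W0 → P.mulVec v = v := by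
    intro v hv
    have hvW : ι.symm v ∈ W := Submodule.mem_map_of_mem hv
    set xv : W := ⟨ι.symm v, hvW⟩ with hxv
    have hrep := B.toBasis.sum_repr xv
    set c : Fin t → ℝ := fun k => B.toBasis.repr xv k with hc
    have hcoe : (ι.symm v : EuclideanSpace ℝ (Fin m))
        = ∑ k, c k • ((B k : EuclideanSpace ℝ (Fin m))) := by
      have := congrArg (Submodule.subtype W) hrep
      simp only [map_sum, _root_.map_smul, Submodule.subtype_apply] at this
      change (xv : EuclideanSpace ℝ (Fin m)) = _
      rw [← this]
      simp [hxv, hc]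
      rfl
    have hv' : v = ∑ k, c k • q k := by
      have := congrArg ι hcoe
      simp only [map_sum, _root_.map_smul, LinearEquiv.apply_symm_apply] at this
      rw [this]
      rfl
    rw [hv']
    have : P.mulVec (∑ k, c k • q k) = ∑ k, c k • P.mulVec (q k) := by
      simp only [← Matrix.mulVecLin_apply, map_sum, _root_.map_smul]
    rw [this]
    exact Finset.sum_congr rfl fun k _ => by rw [hfixq]
  have hPw : P * w = w := by
    ext i j
    have hcol : (fun a => w a j) ∈ W0 := Submodule.subset_span ⟨j, rfl⟩
    have := congrFun (hfix _ hcol) i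
    simpa [Matrix.mulVec, dotProduct, Matrix.mul_apply] using this
  have htr : Matrix.trace P = (w.rank : ℝ) := by
    have h1 : Matrix.trace P = ∑ k : Fin t, ∑ i, q k i * q k i := by
      simp only [Matrix.trace, Matrix.diag, hP, Matrix.of_apply]
      rw [Finset.sum_comm]
    rw [h1]
    have h2 : ∀ k : Fin t, (∑ i, q k i * q k i) = 1 := by
      intro k; rw [horth k k]; simp
    simp only [h2, Finset.sum_const, Finset.card_univ, Fintype.card_fin, nsmul_eq_mul, mul_one]
    have : w.rank = t := by
      rw [Matrix.rank_eq_finrank_span_cols, ht, hW]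
      exact (LinearEquiv.finrank_map_eq ι.symm W0).symm
    rw [this]
  exact ⟨P, hPsym, hPidem, hPw, htr⟩


/-- band matrix -/
def band (m n : ℕ) (g : ℕ → ℝ) : Matrix (Fin m) (Fin n) ℝ :=
  Matrix.of fun i j => if (i : ℕ) = (j : ℕ) ∧ (i : ℕ) < min m n then g i else 0

lemma F_band (m n : ℕ) (g : ℕ → ℝ) :
    F (band m n g) = ∑ i ∈ Finset.range (min m n), g i ^ 2 := by
  have hinner : ∀ i : Fin m, (∑ j : Fin n, (band m n g i j) ^ 2)
      = if (i : ℕ) < min m n then g i ^ 2 else 0 := by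
    intro i
    by_cases hi : (i : ℕ) < min m n
    · have hin : (i : ℕ) < n := lt_of_lt_of_le hi (min_le_right m n)
      rw [if_pos hi]
      have hrw : ∀ j : Fin n, (band m n g i j) ^ 2
          = if j = (⟨(i : ℕ), hin⟩ : Fin n) then g i ^ 2 else 0 := by
        intro j
        simp only [band, Matrix.of_apply]
        by_cases hj : j = (⟨(i : ℕ), hin⟩ : Fin n)
        · subst hj
          rw [if_pos ⟨rfl, hi⟩, if_pos rfl]
        · have hne : ¬((i : ℕ) = (j : ℕ) ∧ (i : ℕ) < min m n) := by
            rintro ⟨h1, -⟩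
            exact hj (by ext; exact h1.symm)
          rw [if_neg hj, if_neg hne]
          norm_num
      rw [Finset.sum_congr rfl (fun j _ => hrw j), Finset.sum_ite_eq']
      simp
    · rw [if_neg hi]
      apply Finset.sum_eq_zero
      intro j _
      simp only [band, Matrix.of_apply]
      rw [if_neg (fun h => hi h.2)]
      norm_num
  calc F (band m n g)
      = ∑ i : Fin m, (if (i : ℕ) < min m n then g i ^ 2 else 0) :=
        Finset.sum_congr rfl fun i _ => hinner i
    _ = ∑ i ∈ Finset.range m, (if i < min m n then g i ^ 2 else 0) :=
        Fin.sum_univ_eq_sum_range (fun i => if i < min m n then g i ^ 2 else 0) m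
    _ = ∑ i ∈ Finset.range (min m n), (if i < min m n then g i ^ 2 else 0) := by
        rw [Finset.sum_subset (Finset.range_subset_range.2 (min_le_left m n))]
        intro i hi hni
        rw [if_neg (by simpa using hni)]
    _ = ∑ i ∈ Finset.range (min m n), g i ^ 2 := by
        apply Finset.sum_congr rfl
        intro i hi
        rw [if_pos (Finset.mem_range.1 hi)]

lemma F_proj_band (m n : ℕ) (P : Matrix (Fin m) (Fin m) ℝ) (hsym : Pᵀ = P)
    (hidem : P * P = P) (g : ℕ → ℝ) :
    F (P * band m n g) = ∑ i ∈ Finset.range (min m n),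
      g i ^ 2 * (if h : i < m then P ⟨i, h⟩ ⟨i, h⟩ else 0) := by
  have h2 : ∀ k a : Fin m, P k a = P a k := fun k a => by
    conv_lhs => rw [← hsym, Matrix.transpose_apply]
  have hPdiag : ∀ k : Fin m, (∑ a : Fin m, (P a k) ^ 2) = P k k := by
    intro k
    have h1 : (P * P) k k = ∑ a, P k a * P a k := Matrix.mul_apply
    rw [hidem] at h1
    rw [h1]
    apply Finset.sum_congr rfl
    intro a _
    rw [h2 k a, sq]
  have hentry : ∀ (a : Fin m) (j : Fin n), (P * band m n g) a j
      = if h : (j : ℕ) < min m n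
        then P a ⟨(j : ℕ), lt_of_lt_of_le h (min_le_left m n)⟩ * g j else 0 := by
    intro a j
    rw [Matrix.mul_apply]
    by_cases hj : (j : ℕ) < min m n
    · have hjm : (j : ℕ) < m := lt_of_lt_of_le hj (min_le_left m n)
      rw [dif_pos hj]
      have hrw : ∀ b : Fin m, P a b * band m n g b j
          = if b = (⟨(j : ℕ), hjm⟩ : Fin m) then P a ⟨(j : ℕ), hjm⟩ * g j else 0 := by
        intro b
        simp only [band, Matrix.of_apply]
        by_cases hb : b = (⟨(j : ℕ), hjm⟩ : Fin m)
        · subst hb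
          rw [if_pos ⟨rfl, hj⟩, if_pos rfl]
        · have hne : ¬((b : ℕ) = (j : ℕ) ∧ (b : ℕ) < min m n) := by
            rintro ⟨h1, -⟩
            exact hb (by ext; exact h1)
          rw [if_neg hb, if_neg hne, mul_zero]
      rw [Finset.sum_congr rfl (fun b _ => hrw b), Finset.sum_ite_eq']
      simp
    · rw [dif_neg hj]
      apply Finset.sum_eq_zero
      intro b _
      simp only [band, Matrix.of_apply]
      have hne : ¬((b : ℕ) = (j : ℕ) ∧ (b : ℕ) < min m n) := by
        rintro ⟨h1, hlt⟩
        rw [h1] at hlt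
        exact hj hlt
      rw [if_neg hne, mul_zero]
  have hinner : ∀ j : Fin n, (∑ a : Fin m, ((P * band m n g) a j) ^ 2)
      = if (j : ℕ) < min m n then g j ^ 2 *
          (if h : (j : ℕ) < m then P ⟨(j : ℕ), h⟩ ⟨(j : ℕ), h⟩ else 0) else 0 := by
    intro j
    by_cases hj : (j : ℕ) < min m n
    · have hjm : (j : ℕ) < m := lt_of_lt_of_le hj (min_le_left m n)
      rw [if_pos hj, dif_pos hjm]
      calc (∑ a : Fin m, ((P * band m n g) a j) ^ 2)
          = ∑ a : Fin m, (P a ⟨(j : ℕ), hjm⟩) ^ 2 * g j ^ 2 := by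
            apply Finset.sum_congr rfl
            intro a _
            rw [hentry a j, dif_pos hj]
            ring
        _ = g j ^ 2 * P ⟨(j : ℕ), hjm⟩ ⟨(j : ℕ), hjm⟩ := by
            rw [← Finset.sum_mul, hPdiag]
            ring
    · rw [if_neg hj]
      apply Finset.sum_eq_zero
      intro a _
      rw [hentry a j, dif_neg hj]
      norm_num
  calc F (P * band m n g)
      = ∑ j : Fin n, ∑ a : Fin m, ((P * band m n g) a j) ^ 2 := Finset.sum_comm
    _ = ∑ j : Fin n, (if (j : ℕ) < min m n then g j ^ 2 *
          (if h : (j : ℕ) < m then P ⟨(j : ℕ), h⟩ ⟨(j : ℕ), h⟩ else 0) else 0) :=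
        Finset.sum_congr rfl fun j _ => hinner j
    _ = ∑ j ∈ Finset.range n, (if j < min m n then g j ^ 2 *
          (if h : j < m then P ⟨j, h⟩ ⟨j, h⟩ else 0) else 0) :=
        Fin.sum_univ_eq_sum_range
          (fun j => if j < min m n then g j ^ 2 *
            (if h : j < m then P ⟨j, h⟩ ⟨j, h⟩ else 0) else 0) n
    _ = ∑ j ∈ Finset.range (min m n), (if j < min m n then g j ^ 2 *
          (if h : j < m then P ⟨j, h⟩ ⟨j, h⟩ else 0) else 0) := by
        rw [Finset.sum_subset (Finset.range_subset_range.2 (min_le_right m n))]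
        intro i hi hni
        rw [if_neg (by simpa using hni)]
    _ = _ := by
        apply Finset.sum_congr rfl
        intro i hi
        rw [if_pos (Finset.mem_range.1 hi)]


lemma F_sub_proj {m n : ℕ} (P : Matrix (Fin m) (Fin m) ℝ) (A : Matrix (Fin m) (Fin n) ℝ)
    (hsym : Pᵀ = P) (hidem : P * P = P) :
    F ((1 - P) * A) = F A - F (P * A) := by
  have hQ : (1 - P) * (1 - P) = 1 - P := by
    rw [sub_mul, one_mul, mul_sub, mul_one, hidem]
    abel
  have h1 : ((1 - P) * A)ᵀ * ((1 - P) * A) = Aᵀ * A - Aᵀ * (P * A) := by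
    rw [Matrix.transpose_mul, Matrix.transpose_sub, Matrix.transpose_one, hsym,
      Matrix.mul_assoc, ← Matrix.mul_assoc (1 - P) (1 - P) A, hQ,
      Matrix.sub_mul, Matrix.one_mul, Matrix.mul_sub]
  have h2 : (P * A)ᵀ * (P * A) = Aᵀ * (P * A) := by
    rw [Matrix.transpose_mul, hsym, Matrix.mul_assoc, ← Matrix.mul_assoc P P A, hidem]
  rw [F_eq_trace, F_eq_trace, F_eq_trace, h1, h2, Matrix.trace_sub]

/-- Nat-indexed singular values, zero beyond `min m n`. -/
def sigNat (x : Matrix (Fin m) (Fin n) ℝ) (i : ℕ) : ℝ :=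
  if h : i < min m n then svals x ⟨i, h⟩ else 0

lemma svals_anti (x : Matrix (Fin m) (Fin n) ℝ) :
    ∀ j k : Fin (min m n), j ≤ k → svals x k ≤ svals x j := by
  intro j k hjk
  unfold svals
  apply Real.sqrt_le_sqrt
  apply Tuple.monotone_sort
  rw [Fin.rev_le_rev]
  exact hjk

lemma svals_nonneg (x : Matrix (Fin m) (Fin n) ℝ) (j : Fin (min m n)) : 0 ≤ svals x j :=
  Real.sqrt_nonneg _

lemma sigNat_nonneg (x : Matrix (Fin m) (Fin n) ℝ) (i : ℕ) : 0 ≤ sigNat x i := by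
  unfold sigNat
  by_cases h : i < min m n
  · rw [dif_pos h]; exact svals_nonneg x _
  · rw [dif_neg h]

lemma sigNat_anti (x : Matrix (Fin m) (Fin n) ℝ) :
    ∀ i j : ℕ, i ≤ j → sigNat x j ≤ sigNat x i := by
  intro i j hij
  by_cases hj : j < min m n
  · have hi : i < min m n := lt_of_le_of_lt hij hj
    unfold sigNat
    rw [dif_pos hj, dif_pos hi]
    exact svals_anti x ⟨i, hi⟩ ⟨j, hj⟩ hij
  · have : sigNat x j = 0 := dif_neg hj
    rw [this]
    exact sigNat_nonneg x i

lemma SigmaMat_eq_band (x : Matrix (Fin m) (Fin n) ℝ) :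
    SigmaMat x = band m n (sigNat x) := by
  ext i j
  simp only [SigmaMat, band, Matrix.of_apply]
  by_cases h : (i : ℕ) = (j : ℕ) ∧ (i : ℕ) < min m n
  · rw [dif_pos h, if_pos h]
    unfold sigNat
    rw [dif_pos h.2]
  · rw [dif_neg h, if_neg h]

lemma SigmaSub_eq_band (s : ℕ) (x : Matrix (Fin m) (Fin n) ℝ) :
    SigmaMat x - SigmaTrunc s x = band m n (fun i => if s ≤ i then sigNat x i else 0) := by
  ext i j
  simp only [SigmaMat, SigmaTrunc, band, Matrix.sub_apply, Matrix.of_apply]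
  by_cases h : (i : ℕ) = (j : ℕ) ∧ (i : ℕ) < min m n
  · rw [dif_pos h, if_pos h]
    by_cases h2 : (i : ℕ) < s
    · rw [dif_pos ⟨h.1, h.2, h2⟩, if_neg (not_le.2 h2), sub_self]
    · rw [dif_neg (fun hh => h2 hh.2.2), if_pos (not_lt.1 h2), sub_zero]
      unfold sigNat
      rw [dif_pos h.2]
  · rw [dif_neg h, dif_neg (fun hh => h ⟨hh.1, hh.2.1⟩), if_neg h, sub_zero]

lemma star_eq_transpose {k : ℕ} (A : Matrix (Fin k) (Fin k) ℝ) : star A = Aᵀ := by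
  ext i j
  simp [Matrix.star_apply]

lemma rank_SigmaTrunc_le (s : ℕ) (x : Matrix (Fin m) (Fin n) ℝ) :
    (SigmaTrunc s x).rank ≤ s := by
  classical
  set dvec : Fin m → ℝ := fun i => if (i : ℕ) < s then 1 else 0 with hdvec
  have hET : SigmaTrunc s x = Matrix.diagonal dvec * SigmaTrunc s x := by
    ext i j
    rw [Matrix.diagonal_mul]
    by_cases h : (i : ℕ) < s
    · rw [hdvec]; simp [h]
    · have hz : SigmaTrunc s x i j = 0 := by
        simp only [SigmaTrunc, Matrix.of_apply]
        rw [dif_neg (fun hh => h hh.2.2)]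
      rw [hz, mul_zero]
  calc (SigmaTrunc s x).rank = (Matrix.diagonal dvec * SigmaTrunc s x).rank := by rw [← hET]
    _ ≤ (Matrix.diagonal dvec).rank := Matrix.rank_mul_le_left _ _
    _ = Fintype.card {i // dvec i ≠ 0} := Matrix.rank_diagonal dvec
    _ ≤ s := by
      rw [← Fintype.card_fin s]
      apply Fintype.card_le_of_injective
        (fun p => (⟨(p.1 : ℕ), by
          by_contra hlt
          exact p.2 (by simp only [hdvec]; rw [if_neg hlt])⟩ : Fin s))
      intro a b hab
      have h2 : ((⟨(a.1 : ℕ), _⟩ : Fin s) : ℕ) = ((⟨(b.1 : ℕ), _⟩ : Fin s) : ℕ) :=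
        congrArg Fin.val hab
      exact Subtype.ext (Fin.ext h2)

/-- any SVD-truncation of `x` is a nearest point of
`S = {y : rank y ≤ s}` to `x`. -/
theorem svd_truncation_mem_projSet (m n s : ℕ) (hs : s ≤ min m n)
    (x : Matrix (Fin m) (Fin n) ℝ)
    (U : Matrix (Fin m) (Fin m) ℝ) (V : Matrix (Fin n) (Fin n) ℝ)
    (hU : U ∈ Matrix.orthogonalGroup (Fin m) ℝ)
    (hV : V ∈ Matrix.orthogonalGroup (Fin n) ℝ)
    (hx : x = U * SigmaMat x * Vᵀ) :
    U * SigmaTrunc s x * Vᵀ ∈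
      projSet {y : Matrix (Fin m) (Fin n) ℝ | y.rank ≤ s} x := by
  classical
  have hUtU : Uᵀ * U = 1 := by
    have h := (Matrix.mem_orthogonalGroup_iff' (Fin m) ℝ).1 hU
    exact h
  have hUUt : U * Uᵀ = 1 := by
    have h := (Matrix.mem_orthogonalGroup_iff (Fin m) ℝ).1 hU
    exact h
  have hVtV : Vᵀ * V = 1 := by
    have h := (Matrix.mem_orthogonalGroup_iff' (Fin n) ℝ).1 hV
    exact h
  have hVVt : V * Vᵀ = 1 := by
    have h := (Matrix.mem_orthogonalGroup_iff (Fin n) ℝ).1 hV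
    exact h
  set lam : ℕ → ℝ := fun i => sigNat x i ^ 2 with hlam
  have hlam0 : ∀ i, 0 ≤ lam i := fun i => sq_nonneg _
  have hlamanti : ∀ i j : ℕ, i ≤ j → lam j ≤ lam i := by
    intro i j hij
    simp only [hlam]
    have h1 := sigNat_anti x i j hij
    have h2 := sigNat_nonneg x j
    nlinarith
  -- the truncated matrix and its distance to x
  have hxy : x - U * SigmaTrunc s x * Vᵀ = U * (SigmaMat x - SigmaTrunc s x) * Vᵀ := by
    rw [Matrix.mul_sub, Matrix.sub_mul]
    exact congrArg (fun X => X - U * SigmaTrunc s x * Vᵀ) hx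
  have hFxy : F (x - U * SigmaTrunc s x * Vᵀ)
      = ∑ i ∈ Finset.range (min m n), (if s ≤ i then sigNat x i else 0) ^ 2 := by
    rw [hxy, F_conj U V _ hUtU hVtV, SigmaSub_eq_band, F_band]
  have hsplit : ∑ i ∈ Finset.range (min m n), (if s ≤ i then sigNat x i else 0) ^ 2
      = ∑ i ∈ Finset.range (min m n), lam i - ∑ i ∈ Finset.range s, lam i := by
    have h1 : ∀ i, (if s ≤ i then sigNat x i else 0) ^ 2
        = lam i - (if i < s then lam i else 0) := by
      intro i
      by_cases h : s ≤ i
      · rw [if_pos h, if_neg (not_lt.2 h), sub_zero]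
      · rw [if_neg h, if_pos (not_le.1 h), sub_self]
        norm_num
    rw [Finset.sum_congr rfl (fun i _ => h1 i), Finset.sum_sub_distrib]
    congr 1
    rw [← Finset.sum_subset (Finset.range_subset_range.2 hs)
      (fun i _ hni => if_neg (by simpa using hni))]
    apply Finset.sum_congr rfl
    intro i hi
    rw [if_pos (Finset.mem_range.1 hi)]
  constructor
  · -- membership: rank ≤ s
    show (U * SigmaTrunc s x * Vᵀ).rank ≤ s
    calc (U * SigmaTrunc s x * Vᵀ).rank
        ≤ (U * SigmaTrunc s x).rank := Matrix.rank_mul_le_left _ _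
      _ ≤ (SigmaTrunc s x).rank := Matrix.rank_mul_le_right _ _
      _ ≤ s := rank_SigmaTrunc_le s x
  · -- minimality
    intro z hz
    have hzrank : z.rank ≤ s := hz
    set w : Matrix (Fin m) (Fin n) ℝ := Uᵀ * z * V with hw
    have hwz : U * w * Vᵀ = z := by
      simp only [hw, Matrix.mul_assoc]
      rw [hVVt, Matrix.mul_one, ← Matrix.mul_assoc, hUUt, Matrix.one_mul]
    have hxz : x - z = U * (SigmaMat x - w) * Vᵀ := by
      conv_lhs => rw [hx, ← hwz]
      rw [← Matrix.sub_mul, ← Matrix.mul_sub]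
    have hFxz : F (x - z) = F (SigmaMat x - w) := by
      rw [hxz]; exact F_conj U V _ hUtU hVtV
    have hrankw : w.rank ≤ s := by
      calc w.rank ≤ (Uᵀ * z).rank := Matrix.rank_mul_le_left _ _
        _ ≤ z.rank := Matrix.rank_mul_le_right _ _
        _ ≤ s := hzrank
    obtain ⟨P, hPsym, hPidem, hPw, hPtr⟩ := exists_proj w
    have hPdiag : ∀ k : Fin m, P k k = ∑ a, (P a k) ^ 2 := by
      intro k
      have h1 : (P * P) k k = ∑ a, P k a * P a k := Matrix.mul_apply
      rw [hPidem] at h1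
      rw [h1]
      have hPs : ∀ k a : Fin m, P k a = P a k := fun k a => by
        conv_lhs => rw [← hPsym, Matrix.transpose_apply]
      apply Finset.sum_congr rfl
      intro a _
      rw [hPs k a, sq]
    set d : ℕ → ℝ := fun i => if h : i < m then P ⟨i, h⟩ ⟨i, h⟩ else 0 with hd
    have hd0 : ∀ i, 0 ≤ d i := by
      intro i
      simp only [hd]
      by_cases h : i < m
      · rw [dif_pos h, hPdiag]
        exact Finset.sum_nonneg fun a _ => sq_nonneg _
      · rw [dif_neg h]
    have hd1 : ∀ i, d i ≤ 1 := by
      intro i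
      simp only [hd]
      by_cases h : i < m
      · rw [dif_pos h]
        set k : Fin m := ⟨i, h⟩
        have h1 : (P k k) ^ 2 ≤ ∑ a, (P a k) ^ 2 :=
          Finset.single_le_sum (fun a _ => sq_nonneg (P a k)) (Finset.mem_univ k)
        have h2 := hPdiag k
        nlinarith
      · rw [dif_neg h]; norm_num
    have hdsum : ∑ i ∈ Finset.range (min m n), d i ≤ (s : ℝ) := by
      have hsub : ∑ i ∈ Finset.range (min m n), d i ≤ ∑ i ∈ Finset.range m, d i :=
        Finset.sum_le_sum_of_subset_of_nonneg
          (Finset.range_subset_range.2 (min_le_left m n)) (fun i _ _ => hd0 i)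
      have htreq : ∑ i ∈ Finset.range m, d i = Matrix.trace P := by
        rw [← Fin.sum_univ_eq_sum_range d m]
        apply Finset.sum_congr rfl
        intro i _
        simp only [hd]
        rw [dif_pos i.isLt]
        rfl
      rw [htreq] at hsub
      refine hsub.trans ?_
      rw [hPtr]
      exact_mod_cast hrankw
    have hmaj := maj (min m n) s hs lam d hlamanti hlam0 hd0 hd1 hdsum
    -- Frobenius chain
    have hFP := F_sub_proj P (SigmaMat x - w) hPsym hPidem
    have hQw : (1 - P) * (SigmaMat x - w) = (1 - P) * SigmaMat x := by
      rw [Matrix.mul_sub]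
      have h0 : (1 - P) * w = 0 := by
        rw [Matrix.sub_mul, Matrix.one_mul, hPw, sub_self]
      rw [h0, sub_zero]
    have hFQ := F_sub_proj P (SigmaMat x) hPsym hPidem
    have hFSig : F (SigmaMat x) = ∑ i ∈ Finset.range (min m n), lam i := by
      rw [SigmaMat_eq_band, F_band]
    have hFPSig : F (P * SigmaMat x) = ∑ i ∈ Finset.range (min m n), lam i * d i := by
      rw [SigmaMat_eq_band, F_proj_band m n P hPsym hPidem]
    have hFfinal : F (x - U * SigmaTrunc s x * Vᵀ) ≤ F (x - z) := by
      rw [hFxy, hsplit, hFxz]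
      have e3 : 0 ≤ F (P * (SigmaMat x - w)) := F_nonneg _
      have e4 : 0 ≤ F ((1 - P) * (SigmaMat x - w)) := F_nonneg _
      rw [hQw, hFQ] at hFP
      rw [hFSig, hFPSig] at hFP
      linarith
    rw [norm_eq_sqrt_F, norm_eq_sqrt_F]
    exact Real.sqrt_le_sqrt hFfinal


end RankPaper
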